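/- Let G be a finite tree and let w be a closed walk in G that traverses each edge of G exactly twice; for each edge e let I(e) = {p(e), q(e)} with p(e) < q(e) be the two step-positions of w at which e is traversed. Then the family of intervals [p(e), q(e)] is laminar (noncrossing): for any two distinct edges e and e', the intervals [p(e), q(e)] and [p(e'), q(e')] are either disjoint or one is strictly contained in the other; in particular it never happens that p(e) < p(e') < q(e) < q(e'). -/

import Mathlib

open SimpleGraph

lemma walk_edges_getElem' {V : Type*} {G : SimpleGraph V} {u v : V} (w : G.Walk u v) :
    ∀ j (h : j < w.edges.length), w.edges[j] = s(w.getVert j, w.getVert (j+1)) := by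
  induction w with
  | nil => intro j h; simp at h
  | cons hadj p ih =>
    intro j h
    cases j with
    | zero => simp [Walk.edges_cons, Walk.getVert_zero, Walk.getVert_cons_succ]
    | succ n =>
      simp only [Walk.edges_cons, List.getElem_cons_succ, Walk.getVert_cons_succ]
      exact ih n (by simpa [Walk.edges_cons] using h)

lemma two_le_count' {α : Type*} [DecidableEq α] {l : List α} {a : α} {p q : ℕ}
    (hpq : p < q) (hp : l[p]? = some a) (hq : l[q]? = some a) : 2 ≤ l.count a := by
  have h1 : a ∈ l.take q := by
    refine List.mem_of_getElem? (i := p) ?_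
    rwa [List.getElem?_take_of_lt hpq]
  have h2 : a ∈ l.drop q := by
    refine List.mem_of_getElem? (i := 0) ?_
    rw [List.getElem?_drop]; simpa using hq
  have : (l.take q ++ l.drop q).count a = (l.take q).count a + (l.drop q).count a := List.count_append
  rw [List.take_append_drop] at this
  have c1 := List.count_pos_iff.mpr h1
  have c2 := List.count_pos_iff.mpr h2
  omega

lemma three_le_count' {α : Type*} [DecidableEq α] {l : List α} {a : α} {p q k : ℕ}
    (hpq : p < q) (hqk : q < k) (hp : l[p]? = some a) (hq : l[q]? = some a)
    (hk : l[k]? = some a) : 3 ≤ l.count a := by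
  have h1 : 2 ≤ (l.take k).count a := by
    refine two_le_count' hpq ?_ ?_
    · rwa [List.getElem?_take_of_lt (hpq.trans hqk)]
    · rwa [List.getElem?_take_of_lt hqk]
  have h2 : a ∈ l.drop k := by
    refine List.mem_of_getElem? (i := 0) ?_
    rw [List.getElem?_drop]; simpa using hk
  have : (l.take k ++ l.drop k).count a = (l.take k).count a + (l.drop k).count a := List.count_append
  rw [List.take_append_drop] at this
  have c2 := List.count_pos_iff.mpr h2
  omega

lemma count_two_unique' {α : Type*} [DecidableEq α] {l : List α} {a : α} {p q j : ℕ}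
    (h2 : l.count a = 2) (hpq : p < q)
    (hp : l[p]? = some a) (hq : l[q]? = some a) (hj : l[j]? = some a)
    (hjp : j ≠ p) (hjq : j ≠ q) : False := by
  rcases lt_trichotomy j p with h | h | h
  · exact absurd (three_le_count' h hpq hj hp hq) (by omega)
  · exact hjp h
  · rcases lt_trichotomy j q with h' | h' | h'
    · exact absurd (three_le_count' h h' hp hj hq) (by omega)
    · exact hjq h'
    · exact absurd (three_le_count' hpq h' hp hq hj) (by omega)

/-- Let `G` be a finite tree and `w` a closed walk in `G` that traverses each
edge of `G` exactly twice.  For distinct edges `e` and `e'`, if `p < q` are the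
two step-positions of `w` at which `e` is traversed (i.e. the positions in the
list `w.edges` holding `e`), and likewise `p' < q'` for `e'`, then the
intervals `[p, q]` and `[p', q']` are either disjoint or one is strictly
contained in the other; in particular they never cross
(`p < p' < q < q'` never happens). -/
theorem tree_walk_intervals_laminar {V : Type*} [Fintype V] [DecidableEq V]
    (G : SimpleGraph V) (hG : G.IsTree) (r : V) (w : G.Walk r r)
    (htwice : ∀ e ∈ G.edgeSet, w.edges.count e = 2)
    (e e' : Sym2 V) (he : e ∈ G.edgeSet) (he' : e' ∈ G.edgeSet) (hne : e ≠ e')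
    (p q p' q' : ℕ) (hpq : p < q) (hpq' : p' < q')
    (hp : w.edges[p]? = some e) (hq : w.edges[q]? = some e)
    (hp' : w.edges[p']? = some e') (hq' : w.edges[q']? = some e') :
    (q < p' ∨ q' < p) ∨ (p < p' ∧ q' < q) ∨ (p' < p ∧ q < q') := by
  classical
  obtain ⟨a, b, heab⟩ : ∃ a b, e = s(a, b) := ⟨e.out.1, e.out.2, by rw [Sym2.mk, e.out_eq]⟩
  have hab : G.Adj a b := by rwa [← SimpleGraph.mem_edgeSet, ← heab]
  set G' : SimpleGraph V := G \ SimpleGraph.fromEdgeSet {e} with hG'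
  have hbridge : ¬ G'.Reachable a b := by
    have := (isAcyclic_iff_forall_adj_isBridge.mp hG.2) hab
    rw [isBridge_iff] at this
    rw [hG', heab]
    exact this
  have hlen : w.edges.length = w.length := w.length_edges
  have hplt : p < w.length := hlen ▸ (List.getElem?_eq_some_iff.mp hp).1
  have hqlt : q < w.length := hlen ▸ (List.getElem?_eq_some_iff.mp hq).1
  have hplt' : p' < w.length := hlen ▸ (List.getElem?_eq_some_iff.mp hp').1
  have hqlt' : q' < w.length := hlen ▸ (List.getElem?_eq_some_iff.mp hq').1
  obtain ⟨T, hTd⟩ : ∃ T : ℕ → Prop, ∀ i, T i = G'.Reachable a (w.getVert i) :=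
    ⟨_, fun _ => rfl⟩
  have stepA : ∀ j (h : j < w.length), w.edges[j]'(hlen ▸ h) ≠ e → (T j ↔ T (j+1)) := by
    intro j h hje
    have hfe : w.edges[j]'(hlen ▸ h) = s(w.getVert j, w.getVert (j+1)) :=
      walk_edges_getElem' w j (hlen ▸ h)
    have hmem : s(w.getVert j, w.getVert (j+1)) ∈ G.edgeSet := by
      rw [← hfe]; exact w.edges_subset_edgeSet (List.getElem_mem _)
    have hadj : G'.Adj (w.getVert j) (w.getVert (j+1)) := by
      rw [hG', SimpleGraph.sdiff_adj]
      refine ⟨hmem, ?_⟩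
      rw [SimpleGraph.fromEdgeSet_adj]
      rintro ⟨h1, -⟩
      exact hje (by rw [hfe]; simpa using h1)
    rw [hTd j, hTd (j+1)]
    exact ⟨fun h' => h'.trans hadj.reachable, fun h' => h'.trans hadj.symm.reachable⟩
  have stepB : ∀ j (h : j < w.length), w.edges[j]'(hlen ▸ h) = e → (T j ↔ ¬ T (j+1)) := by
    intro j h hje
    have hfe : s(w.getVert j, w.getVert (j+1)) = s(a, b) := by
      rw [← walk_edges_getElem' w j (hlen ▸ h), hje, heab]
    rw [Sym2.eq_iff] at hfe
    rw [hTd j, hTd (j+1)]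
    rcases hfe with ⟨h1, h2⟩ | ⟨h1, h2⟩
    · rw [h1, h2]
      constructor
      · intro _ hr; exact hbridge hr
      · intro _; exact SimpleGraph.Reachable.refl a
    · rw [h1, h2]
      constructor
      · intro hr _; exact hbridge hr
      · intro h'; exact absurd (SimpleGraph.Reachable.refl a) h'
  have honly : ∀ j (h : j < w.length), j ≠ p → j ≠ q → w.edges[j]'(hlen ▸ h) ≠ e := by
    intro j h hjp hjq hje
    have hj : w.edges[j]? = some e := by
      rw [List.getElem?_eq_some_iff]; exact ⟨hlen ▸ h, hje⟩
    exact count_two_unique' (htwice e he) hpq hp hq hj hjp hjq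
  have key : ∀ i, i ≤ w.length → ((T i ↔ T 0) ↔ ¬(p < i ∧ i ≤ q)) := by
    intro i
    induction i with
    | zero => intro _; simp
    | succ n ih =>
      intro hn1
      have hn : n < w.length := by omega
      have ihn := ih (by omega)
      by_cases hnp : n = p
      · subst hnp
        have hB := stepB n hn (List.getElem?_eq_some_iff.mp hp).2
        have hTp : T n ↔ T 0 := ihn.mpr (by omega)
        have hfa : n < n + 1 ∧ n + 1 ≤ q := by omega
        clear * - hB hTp hfa
        tauto
      · by_cases hnq : n = q
        · subst hnq
          have hB := stepB n hn (List.getElem?_eq_some_iff.mp hq).2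
          have hTq : ¬(T n ↔ T 0) := fun h' => (ihn.mp h') (by omega)
          have hfa : ¬(p < n + 1 ∧ n + 1 ≤ n) := by omega
          clear * - hB hTq hfa
          tauto
        · have hA := stepA n hn (honly n hn hnp hnq)
          have h1 : (p < n ∧ n ≤ q) → (p < n + 1 ∧ n + 1 ≤ q) := by omega
          have h2 : (p < n + 1 ∧ n + 1 ≤ q) → (p < n ∧ n ≤ q) := by omega
          clear * - hA ihn h1 h2
          tauto
  have hTpq' : T p' ↔ T q' := by
    have hfp : s(w.getVert p', w.getVert (p'+1)) = e' := by
      rw [← walk_edges_getElem' w p' (hlen ▸ hplt')]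
      exact (List.getElem?_eq_some_iff.mp hp').2
    have hfq : s(w.getVert q', w.getVert (q'+1)) = e' := by
      rw [← walk_edges_getElem' w q' (hlen ▸ hqlt')]
      exact (List.getElem?_eq_some_iff.mp hq').2
    have hmem : s(w.getVert q', w.getVert (q'+1)) ∈ G.edgeSet := by
      rw [hfq]; exact he'
    have hadj : G'.Adj (w.getVert q') (w.getVert (q'+1)) := by
      rw [hG', SimpleGraph.sdiff_adj]
      refine ⟨hmem, ?_⟩
      rw [SimpleGraph.fromEdgeSet_adj]
      rintro ⟨h1, -⟩
      exact hne (by rw [← hfq, h1])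
    have heq : s(w.getVert p', w.getVert (p'+1)) = s(w.getVert q', w.getVert (q'+1)) := by
      rw [hfp, hfq]
    rw [Sym2.eq_iff] at heq
    have hco : G'.Reachable (w.getVert p') (w.getVert q') := by
      rcases heq with ⟨h1, -⟩ | ⟨h1, -⟩
      · rw [h1]
      · rw [h1]; exact hadj.symm.reachable
    rw [hTd p', hTd q']
    exact ⟨fun h' => h'.trans hco, fun h' => h'.trans hco.symm⟩
  have hd1 : p ≠ p' := fun h => hne (by rw [h, hp'] at hp; exact (Option.some_inj.mp hp).symm)
  have hd2 : p ≠ q' := fun h => hne (by rw [h, hq'] at hp; exact (Option.some_inj.mp hp).symm)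
  have hd3 : q ≠ p' := fun h => hne (by rw [h, hp'] at hq; exact (Option.some_inj.mp hq).symm)
  have hd4 : q ≠ q' := fun h => hne (by rw [h, hq'] at hq; exact (Option.some_inj.mp hq).symm)
  have k1 := key p' (le_of_lt hplt')
  have k2 := key q' (le_of_lt hqlt')
  have hI : (p < p' ∧ p' ≤ q) ↔ (p < q' ∧ q' ≤ q) := by
    clear * - hTpq' k1 k2
    tauto
  omega
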